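/- Let w ∈ PSL₂(ℝ) be represented by a real matrix (a b; c d), and let v = (1, is; 0, 1) with s real and nonzero. If the product wv belongs to V·H (where V = {(1, it; 0, 1) : t ∈ ℝ} and H = PSL₂(ℝ)), then c = 0, i.e., w is upper triangular. -/
import Mathlib


/-- If `w ∈ PSL₂(ℝ)` is represented by a real matrix `(a b; c d)` (so `ad - bc = 1`),
`v = (1, is; 0, 1)` with `s` real and nonzero, and the product `w * v` lies in `V·H`
(where `V = {(1, it; 0, 1) : t ∈ ℝ}` and `H = PSL₂(ℝ)`, elements taken up to sign),
then `c = 0`, i.e. `w` is upper triangular. -/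
theorem stmt_0 (a b c d s : ℝ) (hs : s ≠ 0) (hdet : a * d - b * c = 1)
    (h : ∃ (t : ℝ) (h' : Matrix (Fin 2) (Fin 2) ℝ) (ε : ℤˣ),
      h'.det = 1 ∧
      (!![(a : ℂ), (b : ℂ); (c : ℂ), (d : ℂ)]) * (!![1, (s : ℂ) * Complex.I; 0, 1]) =
        (((ε : ℤ) : ℂ)) • (!![(1 : ℂ), (t : ℂ) * Complex.I; 0, 1] * h'.map Complex.ofReal)) :
    c = 0 := by
  obtain ⟨t, h', ε, hdet', heq⟩ := h
  have h11 := congrArg (fun M => M 1 1) heq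
  simp only [Matrix.mul_apply, Fin.sum_univ_two, Matrix.smul_apply, Matrix.map_apply,
    Matrix.cons_val', Matrix.cons_val_zero, Matrix.cons_val_one, Matrix.head_cons,
    Matrix.head_fin_const, Matrix.empty_val', Matrix.cons_val_fin_one, smul_eq_mul] at h11
  have him := congrArg Complex.im h11
  simp [Complex.add_im, Complex.mul_im, Complex.ofReal_im, Complex.I_im] at him
  exact him.resolve_right hs
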